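/- Let x ∈ (0,π], let (g_n)_{n∈ℕ₀} ⊂ L²([0,π]) and C > 0 be such that ‖v‖²_{L²([0,π])} ≤ C · Σ_{n=0}^∞ |⟨v, g_n⟩_{L²([0,π])}|² for every v ∈ L²([0,π]). Let κ_x be an integral operator on L²([0,x]) with bounded measurable kernel, and assume the Parseval-type identity Σ_{n=0}^∞ |⟨u, g_n⟩_{L²([0,x])}|² = ⟨u − κ_x u, u⟩_{L²([0,x])} holds for every u ∈ L²([0,x]). Then ‖u‖_{L²([0,x])} ≤ C · ‖u − κ_x u‖_{L²([0,x])} for every u ∈ L²([0,x]); in particular, if Id − κ_x is invertible on L²([0,x]), then ‖(Id−κ_x)^{−1}‖_{L²→L²} ≤ C. -/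

import Mathlib

open MeasureTheory
open scoped ENNReal

/-- `L²` resolvent bound from a lower frame bound plus the Parseval-type
identity of Gel'fand–Levitan theory: if `‖v‖² ≤ C ∑ₙ |⟨v,gₙ⟩|²` on `L²([0,π])`
and `∑ₙ |⟨u,gₙ⟩_{L²([0,x])}|² = ⟨u − κ_x u, u⟩` on `L²([0,x])`, then
`‖u‖ ≤ C ‖u − κ_x u‖` for all `u ∈ L²([0,x])`. -/
theorem stmt17 (x : ℝ) (hx : x ∈ Set.Ioc (0 : ℝ) Real.pi)
    (g : ℕ → ℝ → ℝ) (hgL2 : ∀ n, MemLp (g n) 2 (volume.restrict (Set.Icc (0 : ℝ) Real.pi)))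
    (C : ℝ) (hC : 0 < C)
    -- lower frame bound on `L²([0,π])`:
    (hframe : ∀ v : ℝ → ℝ, MemLp v 2 (volume.restrict (Set.Icc (0 : ℝ) Real.pi)) →
      (∫ t in Set.Icc (0 : ℝ) Real.pi, (v t) ^ 2) ≤
        C * ∑' n : ℕ, (∫ t in Set.Icc (0 : ℝ) Real.pi, v t * g n t) ^ 2)
    (k : ℝ → ℝ → ℝ) (hkmeas : Measurable (Function.uncurry k))
    (Ck : ℝ) (hkbdd : ∀ t s : ℝ, |k t s| ≤ Ck)
    -- Parseval-type identity on `L²([0,x])`: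
    (hparseval : ∀ u : ℝ → ℝ, MemLp u 2 (volume.restrict (Set.Icc (0 : ℝ) x)) →
      ∑' n : ℕ, (∫ t in Set.Icc (0 : ℝ) x, u t * g n t) ^ 2 =
        ∫ t in Set.Icc (0 : ℝ) x,
          (u t - ∫ s in Set.Icc (0 : ℝ) x, k t s * u s) * u t) :
    ∀ u : ℝ → ℝ, MemLp u 2 (volume.restrict (Set.Icc (0 : ℝ) x)) →
      Real.sqrt (∫ t in Set.Icc (0 : ℝ) x, (u t) ^ 2) ≤
        C * Real.sqrt (∫ t in Set.Icc (0 : ℝ) x,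
          (u t - ∫ s in Set.Icc (0 : ℝ) x, k t s * u s) ^ 2) := by
  intro u hu
  obtain ⟨hx0, hxπ⟩ := hx
  set s : Set ℝ := Set.Icc (0 : ℝ) x with hs
  have hsub : s ⊆ Set.Icc (0 : ℝ) Real.pi := Set.Icc_subset_Icc le_rfl hxπ
  set μx : Measure ℝ := volume.restrict s with hμx
  have hμfin : IsFiniteMeasure μx := by
    refine ⟨?_⟩
    rw [hμx, Measure.restrict_apply_univ]
    exact measure_Icc_lt_top
  -- abbreviations
  set K : ℝ → ℝ := fun t => ∫ s' in s, k t s' * u s' with hK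
  set w : ℝ → ℝ := fun t => u t - K t with hw
  set A : ℝ := ∫ t in s, (u t) ^ 2 with hA
  set B : ℝ := ∫ t in s, (w t) ^ 2 with hB
  have hAnn : 0 ≤ A := integral_nonneg fun t => sq_nonneg _
  have hBnn : 0 ≤ B := integral_nonneg fun t => sq_nonneg _
  -- u is integrable on μx
  have huInt : Integrable u μx := hu.integrable (by norm_num)
  -- measurability of K and MemLp
  obtain ⟨u', hu'meas, hu'ae⟩ := hu.aestronglyMeasurable
  have hKmeas : StronglyMeasurable (fun t => ∫ s' in s, k t s' * u' s') := by
    refine MeasureTheory.StronglyMeasurable.integral_prod_right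
      (f := fun t s' => k t s' * u' s') ?_
    exact (hkmeas.mul (hu'meas.measurable.comp measurable_snd)).stronglyMeasurable
  have hKeq : ∀ t, K t = ∫ s' in s, k t s' * u' s' := by
    intro t
    exact integral_congr_ae (hu'ae.mono fun a ha => by simp only [ha])
  have hKmeas' : AEStronglyMeasurable K μx := by
    have : K = fun t => ∫ s' in s, k t s' * u' s' := funext hKeq
    rw [this]
    exact hKmeas.aestronglyMeasurable
  have hCk0 : 0 ≤ Ck := le_trans (abs_nonneg _) (hkbdd 0 0)
  have hKbd : ∀ t, ‖K t‖ ≤ Ck * ∫ s' in s, |u s'| := by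
    intro t
    calc ‖K t‖ ≤ ∫ s' in s, ‖k t s' * u s'‖ := norm_integral_le_integral_norm _
    _ ≤ ∫ s' in s, Ck * |u s'| := by
        refine integral_mono_of_nonneg (Filter.Eventually.of_forall fun a => norm_nonneg _)
          (huInt.abs.const_mul Ck) (Filter.Eventually.of_forall fun a => ?_)
        show ‖k t a * u a‖ ≤ Ck * |u a|
        rw [norm_mul, Real.norm_eq_abs, Real.norm_eq_abs]
        exact mul_le_mul_of_nonneg_right (hkbdd t a) (abs_nonneg _)
    _ = Ck * ∫ s' in s, |u s'| := integral_const_mul _ _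
  have hKmem : MemLp K 2 μx :=
    MemLp.of_bound hKmeas' _ (Filter.Eventually.of_forall hKbd)
  have hwmem : MemLp w 2 μx := hu.sub hKmem
  -- Step 1: frame bound transported to [0, x]
  have h1 : A ≤ C * ∑' n : ℕ, (∫ t in s, u t * g n t) ^ 2 := by
    set v : ℝ → ℝ := s.indicator u with hv
    have hvmem : MemLp v 2 (volume.restrict (Set.Icc (0 : ℝ) Real.pi)) := by
      rw [hv, memLp_indicator_iff_restrict measurableSet_Icc,
        Measure.restrict_restrict measurableSet_Icc,
        Set.inter_eq_self_of_subset_left hsub]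
      exact hu
    have hinter : Set.Icc (0 : ℝ) Real.pi ∩ s = s :=
      Set.inter_eq_self_of_subset_right hsub
    have e1 : (∫ t in Set.Icc (0 : ℝ) Real.pi, (v t) ^ 2) = A := by
      have : ∀ t, (v t) ^ 2 = s.indicator (fun t => (u t) ^ 2) t := by
        intro t
        by_cases h : t ∈ s <;> simp [hv, Set.indicator, h]
      rw [hA]
      calc (∫ t in Set.Icc (0 : ℝ) Real.pi, (v t) ^ 2)
          = ∫ t in Set.Icc (0 : ℝ) Real.pi, s.indicator (fun t => (u t) ^ 2) t := by
            exact integral_congr_ae (Filter.Eventually.of_forall this)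
        _ = ∫ t in Set.Icc (0 : ℝ) Real.pi ∩ s, (u t) ^ 2 :=
            setIntegral_indicator measurableSet_Icc
        _ = ∫ t in s, (u t) ^ 2 := by rw [hinter]
    have e2 : ∀ n, (∫ t in Set.Icc (0 : ℝ) Real.pi, v t * g n t)
        = ∫ t in s, u t * g n t := by
      intro n
      have : ∀ t, v t * g n t = s.indicator (fun t => u t * g n t) t := by
        intro t
        by_cases h : t ∈ s <;> simp [hv, Set.indicator, h]
      calc (∫ t in Set.Icc (0 : ℝ) Real.pi, v t * g n t)
          = ∫ t in Set.Icc (0 : ℝ) Real.pi, s.indicator (fun t => u t * g n t) t :=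
            integral_congr_ae (Filter.Eventually.of_forall this)
        _ = ∫ t in Set.Icc (0 : ℝ) Real.pi ∩ s, u t * g n t :=
            setIntegral_indicator measurableSet_Icc
        _ = ∫ t in s, u t * g n t := by rw [hinter]
    have := hframe v hvmem
    rw [e1] at this
    simpa only [e2] using this
  -- Step 2: Parseval
  have h2 : A ≤ C * ∫ t in s, w t * u t := by
    have := hparseval u hu
    rw [← this]
    exact h1
  -- Step 3: Cauchy–Schwarz
  have hpq : (2 : ℝ).HolderConjugate 2 := by
    rw [Real.holderConjugate_iff]; constructor <;> norm_num
  have hof : (ENNReal.ofReal (2 : ℝ)) = 2 := by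
    rw [ENNReal.ofReal_ofNat]
  have hCS : (∫ t in s, w t * u t) ≤ Real.sqrt B * Real.sqrt A := by
    have hwuInt : Integrable (fun t => w t * u t) μx := by
      refine Integrable.mono' ((hwmem.integrable_sq.add hu.integrable_sq).div_const 2)
        (hwmem.aestronglyMeasurable.mul hu.aestronglyMeasurable)
        (Filter.Eventually.of_forall fun t => ?_)
      show ‖w t * u t‖ ≤ ((fun x => w x ^ 2) + fun x => u x ^ 2) t / 2
      simp only [Pi.add_apply]
      rw [Real.norm_eq_abs, abs_mul]
      have key : ∀ a b : ℝ, |a| * |b| ≤ (a ^ 2 + b ^ 2) / 2 := fun a b => by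
        nlinarith [sq_nonneg (|a| - |b|), sq_abs a, sq_abs b, abs_nonneg a, abs_nonneg b]
      exact key (w t) (u t)
    have step1 : (∫ t in s, w t * u t) ≤ ∫ t in s, ‖w t‖ * ‖u t‖ := by
      refine integral_mono hwuInt (hwuInt.abs.congr ?_) fun t => ?_
      · exact Filter.Eventually.of_forall fun t => by
          simp [Real.norm_eq_abs, abs_mul]
      · calc w t * u t ≤ |w t * u t| := le_abs_self _
          _ = ‖w t‖ * ‖u t‖ := by simp [Real.norm_eq_abs, abs_mul]
    have hwmem2 : MemLp w (ENNReal.ofReal (2 : ℝ)) μx := by rw [hof]; exact hwmem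
    have humem2 : MemLp u (ENNReal.ofReal (2 : ℝ)) μx := by rw [hof]; exact hu
    have step2 := integral_mul_norm_le_Lp_mul_Lq hpq hwmem2 humem2
    have ew : (∫ t in s, ‖w t‖ ^ (2 : ℝ)) = B := by
      rw [hB]
      refine integral_congr_ae (Filter.Eventually.of_forall fun t => ?_)
      show ‖w t‖ ^ (2:ℝ) = w t ^ 2
      rw [show (2:ℝ) = ((2:ℕ):ℝ) by norm_num, Real.rpow_natCast, Real.norm_eq_abs, sq_abs]
    have eu : (∫ t in s, ‖u t‖ ^ (2 : ℝ)) = A := by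
      rw [hA]
      refine integral_congr_ae (Filter.Eventually.of_forall fun t => ?_)
      show ‖u t‖ ^ (2:ℝ) = u t ^ 2
      rw [show (2:ℝ) = ((2:ℕ):ℝ) by norm_num, Real.rpow_natCast, Real.norm_eq_abs, sq_abs]
    rw [ew, eu] at step2
    calc (∫ t in s, w t * u t) ≤ ∫ t in s, ‖w t‖ * ‖u t‖ := step1
      _ ≤ B ^ (1 / 2 : ℝ) * A ^ (1 / 2 : ℝ) := step2
      _ = Real.sqrt B * Real.sqrt A := by
          rw [Real.sqrt_eq_rpow, Real.sqrt_eq_rpow]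
  -- Step 4: conclude
  have hfinal : A ≤ C * (Real.sqrt B * Real.sqrt A) :=
    h2.trans (mul_le_mul_of_nonneg_left hCS hC.le)
  rcases eq_or_lt_of_le (Real.sqrt_nonneg A) with h0 | h0
  · rw [← h0]
    positivity
  · have hA' : Real.sqrt A ^ 2 = A := Real.sq_sqrt hAnn
    nlinarith [Real.sqrt_nonneg B]
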